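/- For independent exponentials $u \sim \mathcal{E}(\mu_1)$, $v \sim \mathcal{E}(\mu_2)$, $z \sim \mathcal{E}(1)$ and $W_1 = \frac{uz}{u+v}$, the identity $F_{W_1}(w) = \int_0^\infty \left(1 - e^{-w(1+\gamma)}\right) \frac{\mu_1/\mu_2}{(\gamma + \mu_1/\mu_2)^2}\, d\gamma$ holds for all $w \ge 0$. -/

import Mathlib

open scoped ENNReal
open MeasureTheory ProbabilityTheory Real Set

-- L1
lemma lintegral_expMeasure {r : ℝ} (f : ℝ → ℝ≥0∞) (hf : Measurable f) :
    ∫⁻ x, f x ∂(expMeasure r) =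
      ∫⁻ x in Ioi (0:ℝ), ENNReal.ofReal (r * Real.exp (-(r*x))) * f x := by
  have h1 : expMeasure r = volume.withDensity (exponentialPDF r) := rfl
  have hm : Measurable (exponentialPDF r) := (measurable_exponentialPDFReal r).ennreal_ofReal
  rw [h1, lintegral_withDensity_eq_lintegral_mul _ hm hf]
  rw [← lintegral_add_compl (fun x => (exponentialPDF r * f) x) measurableSet_Ioi]
  have h2 : (Ioi (0:ℝ))ᶜ = Iic 0 := by simp
  have h3 : ∫⁻ x in (Ioi (0:ℝ))ᶜ, (exponentialPDF r * f) x = 0 := by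
    rw [h2, ← setLIntegral_congr (Iio_ae_eq_Iic (a := (0:ℝ)))]
    rw [setLIntegral_congr_fun (g := fun _ => (0:ℝ≥0∞)) measurableSet_Iio
      (fun x (hx : x < 0) => by
        simp [Pi.mul_apply, exponentialPDF_of_neg hx])]
    simp
  rw [h3, add_zero]
  refine setLIntegral_congr_fun measurableSet_Ioi (fun x hx => ?_)
  simp [Pi.mul_apply, exponentialPDF_of_nonneg (le_of_lt hx)]

-- L2
lemma expMeasure_Iic {t : ℝ} (ht : 0 ≤ t) :
    expMeasure 1 (Iic t) = ENNReal.ofReal (1 - Real.exp (-t)) := by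
  have h1 : expMeasure 1 = volume.withDensity (exponentialPDF 1) := rfl
  rw [h1, withDensity_apply _ measurableSet_Iic,
    lintegral_exponentialPDF_eq_antiDeriv one_pos t, if_pos ht, one_mul]

-- L3
lemma lintegral_Ioi_scale {x : ℝ} (hx : 0 < x) (g : ℝ → ℝ≥0∞) (hg : Measurable g) :
    ∫⁻ y in Ioi (0:ℝ), g y = ENNReal.ofReal x * ∫⁻ t in Ioi (0:ℝ), g (x*t) := by
  have hmap : Measure.map (fun t => x * t) volume
      = ENNReal.ofReal |x⁻¹| • volume := Real.map_volume_mul_left (ne_of_gt hx)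
  have hind : ∀ t : ℝ, (Ioi (0:ℝ)).indicator g (x * t)
      = (Ioi (0:ℝ)).indicator (fun t => g (x*t)) t := by
    intro t
    by_cases ht : t ∈ Ioi (0:ℝ)
    · rw [Set.indicator_of_mem ht, Set.indicator_of_mem (by exact mul_pos hx ht)]
    · rw [Set.indicator_of_notMem ht, Set.indicator_of_notMem]
      intro h
      refine ht ?_
      have h' : 0 < x * t := h
      by_contra ht'
      have : t ≤ 0 := not_lt.mp (fun hh => ht' hh)
      nlinarith
  have key : ∫⁻ t, (Ioi (0:ℝ)).indicator g t ∂(Measure.map (fun t => x * t) volume)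
      = ∫⁻ t, (Ioi (0:ℝ)).indicator g (x * t) := by
    rw [lintegral_map (hg.indicator measurableSet_Ioi) (measurable_const_mul x)]
  rw [hmap] at key
  simp only [lintegral_smul_measure, smul_eq_mul] at key
  rw [lintegral_indicator measurableSet_Ioi g] at key
  simp only [hind] at key
  rw [lintegral_indicator measurableSet_Ioi] at key
  rw [← key, ← mul_assoc, ← ENNReal.ofReal_mul (le_of_lt hx),
    abs_of_pos (inv_pos.mpr hx), mul_inv_cancel₀ (ne_of_gt hx), ENNReal.ofReal_one, one_mul]

-- L4
lemma lintegral_x_exp {c : ℝ} (hc : 0 < c) :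
    ∫⁻ x in Ioi (0:ℝ), ENNReal.ofReal (x * Real.exp (-(c*x))) = ENNReal.ofReal (1/c^2) := by
  have hΓ : Real.Gamma 2 = 1 := by
    have := Real.Gamma_nat_eq_factorial 1
    norm_num at this
    convert this using 2
    norm_num
  have hint : IntegrableOn (fun t : ℝ => Real.exp (-t) * t ^ ((2:ℝ) - 1)) (Ioi 0) :=
    Real.GammaIntegral_convergent (by norm_num)
  have hnn : 0 ≤ᵐ[volume.restrict (Ioi (0:ℝ))] fun t => Real.exp (-t) * t ^ ((2:ℝ)-1) := by
    filter_upwards [ae_restrict_mem measurableSet_Ioi] with t ht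
    have : (0:ℝ) < t := ht
    positivity
  have hbase : ∫⁻ t in Ioi (0:ℝ), ENNReal.ofReal (t * Real.exp (-t)) = 1 := by
    have h1 : ∫⁻ t in Ioi (0:ℝ), ENNReal.ofReal (Real.exp (-t) * t ^ ((2:ℝ)-1))
        = ENNReal.ofReal (∫ t in Ioi (0:ℝ), Real.exp (-t) * t ^ ((2:ℝ)-1)) :=
      (ofReal_integral_eq_lintegral_ofReal hint hnn).symm
    have h2 : ∫ t in Ioi (0:ℝ), Real.exp (-t) * t ^ ((2:ℝ)-1) = Real.Gamma 2 :=
      (Real.Gamma_eq_integral (by norm_num)).symm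
    rw [setLIntegral_congr_fun measurableSet_Ioi (fun t (ht : 0 < t) => ?_), h1, h2, hΓ,
      ENNReal.ofReal_one]
    rw [show ((2:ℝ) - 1) = 1 by norm_num, Real.rpow_one]
    ring_nf
  have hscale := lintegral_Ioi_scale hc (fun t => ENNReal.ofReal (t * Real.exp (-t)))
    (by fun_prop)
  rw [hbase] at hscale
  set A := ∫⁻ t in Ioi (0:ℝ), ENNReal.ofReal (c * t * Real.exp (-(c*t))) with hAdef
  have hcc : ENNReal.ofReal c⁻¹ * ENNReal.ofReal c = 1 := by
    rw [← ENNReal.ofReal_mul (by positivity), inv_mul_cancel₀ (ne_of_gt hc), ENNReal.ofReal_one]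
  have hA : A = ENNReal.ofReal c⁻¹ := by
    calc A = (ENNReal.ofReal c⁻¹ * ENNReal.ofReal c) * A := by rw [hcc, one_mul]
    _ = ENNReal.ofReal c⁻¹ * (ENNReal.ofReal c * A) := by rw [mul_assoc]
    _ = ENNReal.ofReal c⁻¹ * 1 := by rw [← hscale]
    _ = ENNReal.ofReal c⁻¹ := mul_one _
  have heq : ∀ t ∈ Ioi (0:ℝ), ENNReal.ofReal (t * Real.exp (-(c*t)))
      = ENNReal.ofReal c⁻¹ * ENNReal.ofReal (c*t * Real.exp (-(c*t))) := by
    intro t ht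
    rw [← ENNReal.ofReal_mul (by positivity)]
    congr 1
    field_simp
  rw [setLIntegral_congr_fun measurableSet_Ioi heq,
    lintegral_const_mul' _ _ ENNReal.ofReal_ne_top, ← hAdef, hA,
    ← ENNReal.ofReal_mul (by positivity)]
  congr 1
  rw [one_div, pow_two, mul_inv]

lemma key_measure (μ₁ μ₂ w : ℝ) (hμ₁ : 0 < μ₁) (hμ₂ : 0 < μ₂) (hw : 0 ≤ w) :
    (((expMeasure μ₁).prod (expMeasure μ₂)).prod (expMeasure 1))
      {p : (ℝ × ℝ) × ℝ | p.1.1 * p.2 / (p.1.1 + p.1.2) ≤ w}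
    = ∫⁻ γ in Ioi (0:ℝ),
        ENNReal.ofReal ((1 - Real.exp (-(w * (1 + γ)))) * ((μ₁/μ₂) / (γ + μ₁/μ₂)^2)) := by
  haveI := isProbabilityMeasure_expMeasure hμ₁
  haveI := isProbabilityMeasure_expMeasure hμ₂
  haveI := isProbabilityMeasure_expMeasure one_pos
  set S : Set ((ℝ × ℝ) × ℝ) := {p | p.1.1 * p.2 / (p.1.1 + p.1.2) ≤ w} with hSdef
  have hS : MeasurableSet S := by
    apply measurableSet_le
    · fun_prop
    · fun_prop
  rw [Measure.prod_apply hS]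
  rw [lintegral_prod _ (measurable_measure_prodMk_left hS).aemeasurable]
  rw [lintegral_expMeasure _ ((measurable_measure_prodMk_left hS).lintegral_prod_right')]
  -- step: transform inner integrals for x > 0
  have step1 : ∀ x ∈ Ioi (0:ℝ),
      ENNReal.ofReal (μ₁ * Real.exp (-(μ₁*x)))
        * ∫⁻ y, expMeasure 1 (Prod.mk (x, y) ⁻¹' S) ∂(expMeasure μ₂)
      = ∫⁻ γ in Ioi (0:ℝ),
          (ENNReal.ofReal (μ₁ * Real.exp (-(μ₁*x))) * ENNReal.ofReal x)
            * (ENNReal.ofReal (μ₂ * Real.exp (-(μ₂*(x*γ))))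
               * ENNReal.ofReal (1 - Real.exp (-(w*(1+γ))))) := by
    intro x hx
    have hx' : (0:ℝ) < x := hx
    have hmeas_slice : Measurable fun y : ℝ => expMeasure 1 (Prod.mk (x, y) ⁻¹' S) :=
      (measurable_measure_prodMk_left hS).comp measurable_prodMk_left
    rw [lintegral_expMeasure _ hmeas_slice]
    have hslice : ∀ y ∈ Ioi (0:ℝ),
        ENNReal.ofReal (μ₂ * Real.exp (-(μ₂*y))) * expMeasure 1 (Prod.mk (x, y) ⁻¹' S)
        = ENNReal.ofReal (μ₂ * Real.exp (-(μ₂*y)))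
            * ENNReal.ofReal (1 - Real.exp (-(w*(x+y)/x))) := by
      intro y hy
      have hy' : (0:ℝ) < y := hy
      congr 1
      have hpre : Prod.mk (x, y) ⁻¹' S = Iic (w*(x+y)/x) := by
        ext t
        simp only [hSdef, mem_preimage, mem_setOf_eq, mem_Iic]
        rw [div_le_iff₀ (by positivity), le_div_iff₀ hx']
        constructor <;> intro h <;> nlinarith
      rw [hpre, expMeasure_Iic (by positivity)]
    rw [setLIntegral_congr_fun measurableSet_Ioi hslice]
    rw [lintegral_Ioi_scale hx' (fun y => ENNReal.ofReal (μ₂ * Real.exp (-(μ₂*y)))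
        * ENNReal.ofReal (1 - Real.exp (-(w*(x+y)/x)))) (by fun_prop)]
    rw [← mul_assoc]
    rw [← lintegral_const_mul' _ _
      (ENNReal.mul_ne_top ENNReal.ofReal_ne_top ENNReal.ofReal_ne_top)]
    refine setLIntegral_congr_fun measurableSet_Ioi (fun γ hγ => ?_)
    have harg : w*(x + x*γ)/x = w*(1+γ) := by field_simp
    rw [harg]
  rw [setLIntegral_congr_fun measurableSet_Ioi step1]
  -- swap the two integrals
  rw [lintegral_lintegral_swap (by fun_prop)]
  -- compute the inner x-integral
  refine setLIntegral_congr_fun measurableSet_Ioi (fun γ hγ => ?_)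
  have hγ' : (0:ℝ) < γ := hγ
  have hc : (0:ℝ) < μ₁ + μ₂*γ := by positivity
  have he : (0:ℝ) ≤ 1 - Real.exp (-(w*(1+γ))) := by
    have : Real.exp (-(w*(1+γ))) ≤ 1 := Real.exp_le_one_iff.mpr (by nlinarith)
    linarith
  have hpt : ∀ x ∈ Ioi (0:ℝ),
      (ENNReal.ofReal (μ₁ * Real.exp (-(μ₁*x))) * ENNReal.ofReal x)
        * (ENNReal.ofReal (μ₂ * Real.exp (-(μ₂*(x*γ))))
           * ENNReal.ofReal (1 - Real.exp (-(w*(1+γ)))))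
      = (ENNReal.ofReal (1 - Real.exp (-(w*(1+γ)))) * ENNReal.ofReal (μ₁*μ₂))
          * ENNReal.ofReal (x * Real.exp (-((μ₁+μ₂*γ)*x))) := by
    intro x hx
    have hx' : (0:ℝ) < x := hx
    rw [← ENNReal.ofReal_mul (by positivity), ← ENNReal.ofReal_mul (by positivity),
      ← ENNReal.ofReal_mul (by positivity), ← ENNReal.ofReal_mul he,
      ← ENNReal.ofReal_mul (by positivity)]
    congr 1
    rw [show -((μ₁+μ₂*γ)*x) = -(μ₁*x) + -(μ₂*(x*γ)) by ring, Real.exp_add]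
    ring
  rw [setLIntegral_congr_fun measurableSet_Ioi hpt,
    lintegral_const_mul' _ _
      (ENNReal.mul_ne_top ENNReal.ofReal_ne_top ENNReal.ofReal_ne_top),
    lintegral_x_exp hc, mul_assoc,
    ← ENNReal.ofReal_mul (by positivity), ← ENNReal.ofReal_mul he]
  congr 1
  rw [show μ₁*μ₂ * (1/(μ₁+μ₂*γ)^2) = (μ₁/μ₂)/(γ+μ₁/μ₂)^2 by field_simp; ring]

/-- For independent exponentials `u ~ Exp(μ₁)`, `v ~ Exp(μ₂)`, `z ~ Exp(1)` and
`W₁ = u z/(u+v)`, the cdf of `W₁` satisfies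
`F(w) = ∫₀^∞ (1 - e^{-w(1+γ)}) (μ₁/μ₂)/(γ + μ₁/μ₂)² dγ` for all `w ≥ 0`. -/
theorem cdf_W1_integral_formula
    {Ω : Type*} [MeasureSpace Ω] [IsProbabilityMeasure (ℙ : Measure Ω)]
    (μ₁ μ₂ : ℝ) (hμ₁ : 0 < μ₁) (hμ₂ : 0 < μ₂)
    (u v z : Ω → ℝ)
    (hu : Measure.map u ℙ = expMeasure μ₁)
    (hv : Measure.map v ℙ = expMeasure μ₂)
    (hz : Measure.map z ℙ = expMeasure 1)
    (hmu : Measurable u) (hmv : Measurable v) (hmz : Measurable z)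
    (hindep : iIndepFun ![u, v, z] ℙ) :
    ∀ w : ℝ, 0 ≤ w →
      (ℙ {ω | u ω * z ω / (u ω + v ω) ≤ w}).toReal =
        ∫ γ in Set.Ioi (0 : ℝ),
          (1 - Real.exp (-(w * (1 + γ)))) * ((μ₁ / μ₂) / (γ + μ₁ / μ₂) ^ 2) := by
  intro w hw
  have hmeasf : ∀ i, Measurable (![u, v, z] i) := by
    intro i
    fin_cases i <;> simpa
  have h1 : ProbabilityTheory.IndepFun (fun ω => (u ω, v ω)) z ℙ := by
    have := hindep.indepFun_prodMk hmeasf 0 1 2 (by decide) (by decide)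
    simpa using this
  have h2 : ProbabilityTheory.IndepFun u v ℙ := by
    have := hindep.indepFun (i := 0) (j := 1) (by decide)
    simpa using this
  have hmapuv : Measure.map (fun ω => (u ω, v ω)) ℙ
      = (expMeasure μ₁).prod (expMeasure μ₂) := by
    rw [(ProbabilityTheory.indepFun_iff_map_prod_eq_prod_map_map hmu.aemeasurable
      hmv.aemeasurable).mp h2, hu, hv]
  have hmap3 : Measure.map (fun ω => ((u ω, v ω), z ω)) ℙ
      = ((expMeasure μ₁).prod (expMeasure μ₂)).prod (expMeasure 1) := by
    rw [(ProbabilityTheory.indepFun_iff_map_prod_eq_prod_map_map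
      (hmu.prodMk hmv).aemeasurable hmz.aemeasurable).mp h1, hmapuv, hz]
  have hS : MeasurableSet {p : (ℝ × ℝ) × ℝ | p.1.1 * p.2 / (p.1.1 + p.1.2) ≤ w} := by
    apply measurableSet_le
    · fun_prop
    · fun_prop
  have hsets : {ω | u ω * z ω / (u ω + v ω) ≤ w}
      = (fun ω => ((u ω, v ω), z ω)) ⁻¹'
          {p : (ℝ × ℝ) × ℝ | p.1.1 * p.2 / (p.1.1 + p.1.2) ≤ w} := rfl
  rw [hsets, ← Measure.map_apply ((hmu.prodMk hmv).prodMk hmz) hS, hmap3,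
    key_measure μ₁ μ₂ w hμ₁ hμ₂ hw]
  rw [integral_eq_lintegral_of_nonneg_ae ?nn ?sm]
  case nn =>
    filter_upwards [ae_restrict_mem measurableSet_Ioi] with γ hγ
    have hγ' : (0:ℝ) < γ := hγ
    have he : Real.exp (-(w*(1+γ))) ≤ 1 := Real.exp_le_one_iff.mpr (by nlinarith)
    have h0 : (0:ℝ) ≤ (μ₁ / μ₂) / (γ + μ₁ / μ₂) ^ 2 := by positivity
    have := mul_nonneg (by linarith : (0:ℝ) ≤ 1 - Real.exp (-(w*(1+γ)))) h0
    simpa using this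
  case sm => exact (by fun_prop : Measurable fun γ : ℝ =>
      (1 - Real.exp (-(w * (1 + γ)))) * ((μ₁ / μ₂) / (γ + μ₁ / μ₂) ^ 2)).aestronglyMeasurable
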